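/- Let ω be a weight with Young conjugate φ* of φ(t)=ω(e^t), and suppose ω(t) ≥ a + b·log(1+t) for all t ≥ 0, with b > 0. Then for every λ > 0 and t ≥ 1, inf_{N∈ℕ₀} t^{-2N} e^{(λ+2/b)φ*(2N/(λ+2/b))} ≤ e^{-λω(t)} e^{-2a/b}. -/

import Mathlib

set_option maxHeartbeats 1000000 in
/-- Let `ω` be a weight with Young conjugate `φ*` of `φ(t) = ω(e^t)`, and suppose
`ω(t) ≥ a + b·log(1+t)` for all `t ≥ 0` with `b > 0`. Then for every `λ > 0` and
`t ≥ 1`, `inf_{N ∈ ℕ₀} t^(-2N) e^((λ+2/b) φ*(2N/(λ+2/b))) ≤ e^(-λ ω(t)) e^(-2a/b)`. -/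
theorem inf_powers_le_exp_weight (ω : ℝ → ℝ) (φs : ℝ → ℝ) (a b : ℝ) (hb : 0 < b)
    (hω_mono : ∀ s t, 0 ≤ s → s ≤ t → ω s ≤ ω t)
    (hω_nonneg : ∀ t, 0 ≤ t → 0 ≤ ω t)
    (hconv : ConvexOn ℝ Set.univ fun t => ω (Real.exp t))
    (hφs : ∀ t, 0 ≤ t →
      IsLUB {y : ℝ | ∃ s, 0 ≤ s ∧ y = s * t - ω (Real.exp s)} (φs t))
    (hlog : ∀ t, 0 ≤ t → a + b * Real.log (1 + t) ≤ ω t)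
    (lam : ℝ) (hlam : 0 < lam) (t : ℝ) (ht : 1 ≤ t) :
    (⨅ N : ℕ, t ^ (-(2 * (N : ℝ))) *
        Real.exp ((lam + 2 / b) * φs (2 * (N : ℝ) / (lam + 2 / b))))
      ≤ Real.exp (-lam * ω t) * Real.exp (-2 * a / b) := by
  set φ : ℝ → ℝ := fun s => ω (Real.exp s) with hφdef
  have ht0 : (0 : ℝ) < t := lt_of_lt_of_le one_pos ht
  set L : ℝ := lam + 2 / b with hLdef
  have hL : 0 < L := by rw [hLdef]; positivity
  have hbL : 2 / b ≤ L := by rw [hLdef]; linarith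
  clear_value L
  set u : ℝ := Real.log t with hudef
  have hu0 : 0 ≤ u := Real.log_nonneg ht
  have hexpu : Real.exp u = t := by rw [hudef]; exact Real.exp_log ht0
  clear_value u
  -- φ is monotone
  have hφmono : ∀ s₁ s₂ : ℝ, s₁ ≤ s₂ → φ s₁ ≤ φ s₂ := by
    intro s₁ s₂ h
    rw [hφdef]
    exact hω_mono _ _ (Real.exp_pos _).le (Real.exp_le_exp.2 h)
  have hφu : φ u = ω t := by rw [hφdef]; simp only; rw [hexpu]
  -- upper bound / lub facts for φs
  have hφs_ub : ∀ y, 0 ≤ y → ∀ s, 0 ≤ s → s * y - φ s ≤ φs y := by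
    intro y hy s hs
    exact (hφs y hy).1 ⟨s, hs, rfl⟩
  have hφs_lub : ∀ y, 0 ≤ y → ∀ M, (∀ s, 0 ≤ s → s * y - φ s ≤ M) → φs y ≤ M := by
    intro y hy M hM
    refine (hφs y hy).2 ?_
    rintro z ⟨s, hs, rfl⟩
    exact hM s hs
  clear_value φ
  -- φs is monotone on [0, ∞)
  have hφs_mono : ∀ y₁ y₂, 0 ≤ y₁ → y₁ ≤ y₂ → φs y₁ ≤ φs y₂ := by
    intro y₁ y₂ hy₁ h12
    refine hφs_lub y₁ hy₁ _ (fun s hs => ?_)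
    calc s * y₁ - φ s ≤ s * y₂ - φ s := by nlinarith
    _ ≤ φs y₂ := hφs_ub y₂ (hy₁.trans h12) s hs
  -- ε-subgradient: for every e > 0 there is g ≥ 0 with φs g ≤ u*g - ω t + e
  have hsub : ∀ e : ℝ, 0 < e → ∃ g : ℝ, 0 ≤ g ∧ φs g ≤ u * g - ω t + e := by
    intro e he
    set g₁ : ℝ := φ (u + 1) - φ u with hg₁def
    have hg₁0 : 0 ≤ g₁ := by
      have := hφmono u (u + 1) (by linarith)
      rw [hg₁def]; linarith
    set δ : ℝ := min 1 (e / (g₁ + 1)) with hδdef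
    have hδ0 : 0 < δ := lt_min one_pos (by positivity)
    have hδ1 : δ ≤ 1 := min_le_left _ _
    have hδe : δ ≤ e / (g₁ + 1) := min_le_right _ _
    clear_value δ
    clear_value g₁
    set g : ℝ := (φ (u + δ) - φ u) / δ with hgdef
    have hnum0 : 0 ≤ φ (u + δ) - φ u := by
      have := hφmono u (u + δ) (by linarith); linarith
    have hg0 : 0 ≤ g := by rw [hgdef]; exact div_nonneg hnum0 hδ0.le
    have hgδ : g * δ = φ (u + δ) - φ u := by
      rw [hgdef]; field_simp
    clear_value g
    have hne1 : u + δ ≠ u := by intro h; exact hδ0.ne' (by linarith)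
    have hne2 : u + 1 ≠ u := by intro h; norm_num at h
    -- slope comparison: slope over [u, u+δ] ≤ slope over [u, u+1]
    have hslope1 : φ (u + δ) - φ u ≤ g₁ * δ := by
      have h := hconv.secant_mono (a := u) (x := u + δ) (y := u + 1)
        (Set.mem_univ _) (Set.mem_univ _) (Set.mem_univ _)
        hne1 hne2 (by linarith)
      have h2 : (φ (u + δ) - φ u) / δ ≤ g₁ := by
        rw [hg₁def]
        calc (φ (u + δ) - φ u) / δ = (φ (u + δ) - φ u) / (u + δ - u) := by ring_nf
        _ ≤ (φ (u + 1) - φ u) / (u + 1 - u) := h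
        _ = φ (u + 1) - φ u := by ring_nf
      calc φ (u + δ) - φ u = (φ (u + δ) - φ u) / δ * δ := by field_simp
      _ ≤ g₁ * δ := by nlinarith
    have hkey1 : φ (u + δ) - φ u ≤ e := by
      have h2 : g₁ * δ ≤ g₁ * (e / (g₁ + 1)) := by nlinarith
      have h3 : g₁ * (e / (g₁ + 1)) ≤ e := by
        rw [mul_div_assoc', div_le_iff₀ (by positivity)]
        nlinarith
      linarith
    refine ⟨g, hg0, ?_⟩
    have key2 : ∀ s, 0 ≤ s → s * g - φ s ≤ u * g - φ u + e := by
      intro s _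
      rcases lt_trichotomy s u with hsu | hsu | hsu
      · -- s < u : slope(u,s) ≤ slope(u, u+δ) = g
        have h := hconv.secant_mono (a := u) (x := s) (y := u + δ)
          (Set.mem_univ _) (Set.mem_univ _) (Set.mem_univ _)
          (by intro h; exact absurd h hsu.ne) hne1 (by linarith)
        have h' : (φ s - φ u) / (s - u) ≤ g := by
          calc (φ s - φ u) / (s - u) ≤ (φ (u + δ) - φ u) / (u + δ - u) := h
          _ = g * δ / δ := by rw [hgδ]; ring_nf
          _ = g := by field_simp
        have hneg : s - u < 0 := by linarith
        have hge : g * (s - u) ≤ φ s - φ u := by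
          have := (div_le_iff_of_neg hneg).1 h'
          linarith
        nlinarith
      · subst hsu; linarith
      · rcases le_or_gt s (u + δ) with hsδ | hsδ
        · -- u < s ≤ u + δ
          have hφs' : φ u ≤ φ s := hφmono u s hsu.le
          have h5 : g * (s - u) ≤ g * δ := by nlinarith
          nlinarith [hgδ, hkey1]
        · -- s > u + δ : g = slope(u, u+δ) ≤ slope(u, s)
          have h := hconv.secant_mono (a := u) (x := u + δ) (y := s)
            (Set.mem_univ _) (Set.mem_univ _) (Set.mem_univ _)
            hne1 (by intro h; exact absurd h (by intro h2; linarith)) (by linarith)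
          have h' : g ≤ (φ s - φ u) / (s - u) := by
            calc g = g * δ / δ := by field_simp
            _ = (φ (u + δ) - φ u) / (u + δ - u) := by rw [hgδ]; ring_nf
            _ ≤ (φ s - φ u) / (s - u) := h
          have hpos : 0 < s - u := by linarith
          have hge : g * (s - u) ≤ φ s - φ u := by
            have := (le_div_iff₀ hpos).1 h'
            linarith
          nlinarith
    have := hφs_lub g hg0 (u * g - φ u + e) key2
    linarith [hφu]
  -- main argument
  set r : ℝ := Real.exp (-lam * ω t) * Real.exp (-2 * a / b) with hrdef
  have hr : 0 < r := by rw [hrdef]; positivity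
  clear_value r
  refine le_of_forall_pos_le_add ?_
  intro ε hε
  set e : ℝ := Real.log (1 + ε / r) / L with hedef
  have h1ε : 0 < 1 + ε / r := by positivity
  have he : 0 < e := by
    rw [hedef]
    apply div_pos _ hL
    apply Real.log_pos
    have : 0 < ε / r := by positivity
    linarith
  have hexpLe : Real.exp (L * e) = 1 + ε / r := by
    rw [hedef, mul_div_cancel₀ _ (ne_of_gt hL)]
    exact Real.exp_log h1ε
  clear_value e
  obtain ⟨g, hg0, hgbound⟩ := hsub e he
  set N : ℕ := ⌊L * g / 2⌋₊ with hNdef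
  have hfl1 : (N : ℝ) ≤ L * g / 2 := Nat.floor_le (by positivity)
  have hfl2 : L * g / 2 < N + 1 := Nat.lt_floor_add_one _
  clear_value N
  set y : ℝ := 2 * (N : ℝ) / L with hydef
  have hy0 : 0 ≤ y := by rw [hydef]; positivity
  have hLy : L * y = 2 * N := by rw [hydef]; field_simp
  clear_value y
  have hyg : y ≤ g := by nlinarith
  have hgap : L * (g - y) ≤ 2 := by nlinarith
  -- bound on ω t from hlog
  set c : ℝ := 2 / b with hcdef
  set A : ℝ := -2 * a / b with hAdef
  have hLc : L = lam + c := by rw [hcdef, hLdef]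
  have hAc : -A = 2 * a / b := by rw [hAdef]; ring
  clear_value c A
  have hωb' : 2 * a / b + 2 * u ≤ 2 / b * ω t := by
    have h1 : a + b * Real.log (1 + t) ≤ ω t := hlog t ht0.le
    have h2 : u ≤ Real.log (1 + t) := by
      rw [hudef]; exact Real.log_le_log ht0 (by linarith)
    have h3 : 2 / b * (a + b * Real.log (1 + t)) ≤ 2 / b * ω t := by
      apply mul_le_mul_of_nonneg_left h1 (by positivity)
    have h4 : 2 / b * (a + b * Real.log (1 + t)) = 2 * a / b + 2 * Real.log (1 + t) := by
      field_simp
    nlinarith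
  have hωb : -A + 2 * u ≤ c * ω t := by rw [hAc, hcdef]; exact hωb'
  -- exponent bound
  have hφsy : φs y ≤ φs g := hφs_mono y g hy0 hyg
  have hexpbound : -(2 * (N : ℝ)) * u + L * φs y ≤ -lam * ω t + A + L * e := by
    have h1 : L * φs y ≤ L * (u * g - ω t + e) :=
      mul_le_mul_of_nonneg_left (le_trans hφsy hgbound) hL.le
    have h3 : L * u * (g - y) ≤ 2 * u := by
      nlinarith [mul_le_mul_of_nonneg_right hgap hu0]
    have h4 : L * ω t = lam * ω t + c * ω t := by rw [hLc]; ring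
    have h2' : L * y * u = 2 * (N : ℝ) * u := by rw [hLy]
    linarith only [h1, h2', h3, h4, hωb]
  -- value at N
  have hval : t ^ (-(2 * (N : ℝ))) * Real.exp (L * φs y) ≤ r + ε := by
    have hrpow : t ^ (-(2 * (N : ℝ))) = Real.exp (-(2 * (N : ℝ)) * u) := by
      rw [Real.rpow_def_of_pos ht0, ← hudef]; ring_nf
    rw [hrpow, ← Real.exp_add]
    have hle : Real.exp (-(2 * (N : ℝ)) * u + L * φs y)
        ≤ Real.exp (-lam * ω t + A + L * e) := Real.exp_le_exp.2 hexpbound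
    have heq : Real.exp (-lam * ω t + A + L * e) = r + ε := by
      rw [Real.exp_add, Real.exp_add, hexpLe, hrdef, hAdef]
      field_simp
    linarith [hle, heq.le]
  -- conclude via infimum
  have hbdd : BddBelow (Set.range fun N : ℕ => t ^ (-(2 * (N : ℝ))) *
      Real.exp (L * φs (2 * (N : ℝ) / L))) := by
    refine ⟨0, ?_⟩
    rintro x ⟨M, rfl⟩
    positivity
  calc (⨅ N : ℕ, t ^ (-(2 * (N : ℝ))) * Real.exp (L * φs (2 * (N : ℝ) / L)))
      ≤ t ^ (-(2 * (N : ℝ))) * Real.exp (L * φs (2 * (N : ℝ) / L)) := ciInf_le hbdd N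
    _ ≤ r + ε := by rw [← hydef]; exact hval
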